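/- The composition of upward planar orders on progressive graphs is associative: given composable admissible UPO-graphs (G₁,σ₁,≺₁), (G₂,σ₂,≺₂), (G₃,σ₃,≺₃), one has (≺₃ ∘ ≺₂) ∘ ≺₁ = ≺₃ ∘ (≺₂ ∘ ≺₁) as linear orders on E(G₃ ∘ G₂ ∘ G₁). -/
import Mathlib


/-- A progressive graph: a directed (multi)graph with sources `s`, targets `t`, and
a distinguished boundary set `σ` of vertices. -/
structure PGraph where
  V : Type
  E : Type
  s : E → V
  t : E → V
  σ : Set V

namespace PGraph

variable (G : PGraph)

/-- One edge can be followed by another. -/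
def step (e f : G.E) : Prop := G.t e = G.s f

/-- The reachable order: a directed path starts with `e₁` and ends with `e₂`. -/
def reach : G.E → G.E → Prop := Relation.ReflTransGen G.step

/-- No directed cycles. -/
def Acyclic : Prop := ∀ e, ¬ Relation.TransGen G.step e e

/-- Incoming edges of a vertex. -/
def I (v : G.V) : Set G.E := {e | G.t e = v}

/-- Outgoing edges of a vertex. -/
def O (v : G.V) : Set G.E := {e | G.s e = v}

/-- An input edge: it starts at a boundary vertex. -/
def InputEdge (e : G.E) : Prop := G.s e ∈ G.σ

/-- An output edge: it ends at a boundary vertex. -/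
def OutputEdge (e : G.E) : Prop := G.t e ∈ G.σ

/-- An inner vertex. -/
def Inner (v : G.V) : Prop := v ∉ G.σ

/-- An input vertex: a boundary vertex which is a source. -/
def InputVertex (v : G.V) : Prop := v ∈ G.σ ∧ ∃ e, G.s e = v

/-- An output vertex: a boundary vertex which is a sink. -/
def OutputVertex (v : G.V) : Prop := v ∈ G.σ ∧ ∃ e, G.t e = v

/-- The boundary consists of leaves: every boundary vertex has exactly one
incident edge-end. -/
def Progressive : Prop := ∀ v ∈ G.σ, ∃! e : G.E, G.s e = v ∨ G.t e = v

/-- The reflexive closure of a strict order on edges. -/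
def le (lt : G.E → G.E → Prop) (a b : G.E) : Prop := lt a b ∨ a = b

/-- The convex hull of a set of edges with respect to a linear order `lt`. -/
def conv (lt : G.E → G.E → Prop) (X : Set G.E) : Set G.E :=
  {y | ∃ a ∈ X, ∃ b ∈ X, G.le lt a y ∧ G.le lt y b}

/-- (Q₁): the reachable order implies the linear order. -/
def Q1 (lt : G.E → G.E → Prop) : Prop :=
  ∀ e₁ e₂, G.reach e₁ e₂ → G.le lt e₁ e₂

/-- (Q₂), the nesting condition. -/
def Q2 (lt : G.E → G.E → Prop) : Prop :=
  ∀ e₁ e e₂ : G.E, lt e₁ e → lt e e₂ →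
    (G.t e₁ = G.t e₂ → G.I (G.t e) ⊆ G.conv lt (G.I (G.t e₁))) ∧
    (G.s e₁ = G.s e₂ → G.O (G.s e) ⊆ G.conv lt (G.O (G.s e₁))) ∧
    (G.t e₁ = G.s e₂ →
      G.I (G.t e) ⊆ G.conv lt (G.I (G.t e₁)) ∨ G.O (G.s e) ⊆ G.conv lt (G.O (G.s e₂)))

/-- An upward planar order: a linear (strict total) order on edges satisfying
(Q₁) and the nesting condition (Q₂). -/
def UPO (lt : G.E → G.E → Prop) : Prop :=
  IsStrictTotalOrder G.E lt ∧ G.Q1 lt ∧ G.Q2 lt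

/-- Admissibility: for every inner vertex `v`, input edges avoid `conv (O v)` and
output edges avoid `conv (I v)`. -/
def Admissible (lt : G.E → G.E → Prop) : Prop :=
  ∀ v : G.V, G.Inner v →
    (∀ e, G.InputEdge e → e ∉ G.conv lt (G.O v)) ∧
    (∀ e, G.OutputEdge e → e ∉ G.conv lt (G.I v))

end PGraph

/-- Data exhibiting `G` as the composite `G₂ ∘ G₁` of two progressive graphs:
the edges of `G₁` and `G₂` embed into those of `G` via `j₁`, `j₂`, overlapping
exactly on the output edges of `G₁`, identified with the input edges of `G₂`;
the removed boundary vertices are the output vertices of `G₁` and the input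
vertices of `G₂`, and the boundary of `G` is the union of the input vertices of
`G₁` and the output vertices of `G₂`. -/
structure CompData (G₁ G₂ G : PGraph) where
  j₁ : G₁.E → G.E
  j₂ : G₂.E → G.E
  k₁ : G₁.V → G.V
  k₂ : G₂.V → G.V
  inj₁ : Function.Injective j₁
  inj₂ : Function.Injective j₂
  coverE : ∀ e : G.E, (∃ a, j₁ a = e) ∨ (∃ b, j₂ b = e)
  glue : ∀ a b, j₁ a = j₂ b → G₁.OutputEdge a ∧ G₂.InputEdge b
  glueOut : ∀ a, G₁.OutputEdge a → ∃ b, G₂.InputEdge b ∧ j₁ a = j₂ b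
  glueIn : ∀ b, G₂.InputEdge b → ∃ a, G₁.OutputEdge a ∧ j₁ a = j₂ b
  src₁ : ∀ a, G.s (j₁ a) = k₁ (G₁.s a)
  tgt₁ : ∀ a, ¬ G₁.OutputEdge a → G.t (j₁ a) = k₁ (G₁.t a)
  tgt₂ : ∀ b, G.t (j₂ b) = k₂ (G₂.t b)
  src₂ : ∀ b, ¬ G₂.InputEdge b → G.s (j₂ b) = k₂ (G₂.s b)
  injV₁ : ∀ v w, ¬ G₁.OutputVertex v → ¬ G₁.OutputVertex w → k₁ v = k₁ w → v = w
  injV₂ : ∀ v w, ¬ G₂.InputVertex v → ¬ G₂.InputVertex w → k₂ v = k₂ w → v = w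
  disjV : ∀ v w, ¬ G₁.OutputVertex v → ¬ G₂.InputVertex w → k₁ v ≠ k₂ w
  coverV : ∀ u : G.V,
    (∃ v, ¬ G₁.OutputVertex v ∧ k₁ v = u) ∨ (∃ w, ¬ G₂.InputVertex w ∧ k₂ w = u)
  bdry : ∀ u : G.V,
    u ∈ G.σ ↔ (∃ v, G₁.InputVertex v ∧ k₁ v = u) ∨ (∃ w, G₂.OutputVertex w ∧ k₂ w = u)

/-- `lt` is the shuffle-style composed linear order `lt₂ ∘ lt₁` on the edges of the
composite: it restricts to `lt₁` on `E(G₁)` and to `lt₂` on `E(G₂)`, and an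
unidentified edge of `G₁` precedes an unidentified edge of `G₂` iff some identified
edge `ē = j₁ o = j₂ i` lies weakly between them. -/
def IsCompOrder {G₁ G₂ G : PGraph} (C : CompData G₁ G₂ G)
    (lt₁ : G₁.E → G₁.E → Prop) (lt₂ : G₂.E → G₂.E → Prop)
    (lt : G.E → G.E → Prop) : Prop :=
  (∀ a a', lt₁ a a' ↔ lt (C.j₁ a) (C.j₁ a')) ∧
  (∀ b b', lt₂ b b' ↔ lt (C.j₂ b) (C.j₂ b')) ∧
  (∀ a b, (∀ b', C.j₁ a ≠ C.j₂ b') → (∀ a', C.j₂ b ≠ C.j₁ a') →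
    (lt (C.j₁ a) (C.j₂ b) ↔
      ∃ o i, C.j₁ o = C.j₂ i ∧ G₁.le lt₁ a o ∧ G₂.le lt₂ i b))

theorem le_map_aux {G G' : PGraph} {lt : G.E → G.E → Prop} {lt' : G'.E → G'.E → Prop}
    {j : G.E → G'.E} (hj : Function.Injective j)
    (h : ∀ a a', lt a a' ↔ lt' (j a) (j a')) (a a' : G.E) :
    G.le lt a a' ↔ G'.le lt' (j a) (j a') := by
  unfold PGraph.le
  exact or_congr (h a a') ⟨fun e => congrArg j e, fun e => hj e⟩

/-- Associativity of the composition of upward planar orders. -/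
theorem comp_assoc (G₁ G₂ G₃ G₁₂ G₂₃ G : PGraph)
    [Fintype G₁.E] [Fintype G₂.E] [Fintype G₃.E]
    [Fintype G₁₂.E] [Fintype G₂₃.E] [Fintype G.E]
    (lt₁ : G₁.E → G₁.E → Prop) (lt₂ : G₂.E → G₂.E → Prop) (lt₃ : G₃.E → G₃.E → Prop)
    (lt₁₂ : G₁₂.E → G₁₂.E → Prop) (lt₂₃ : G₂₃.E → G₂₃.E → Prop)
    (ltA ltB : G.E → G.E → Prop)
    (hP₁ : G₁.Progressive) (hA₁ : G₁.Acyclic) (hU₁ : G₁.UPO lt₁) (hAd₁ : G₁.Admissible lt₁)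
    (hP₂ : G₂.Progressive) (hA₂ : G₂.Acyclic) (hU₂ : G₂.UPO lt₂) (hAd₂ : G₂.Admissible lt₂)
    (hP₃ : G₃.Progressive) (hA₃ : G₃.Acyclic) (hU₃ : G₃.UPO lt₃) (hAd₃ : G₃.Admissible lt₃)
    (C₁ : CompData G₁ G₂ G₁₂) (C₂ : CompData G₁₂ G₃ G)
    (D₁ : CompData G₂ G₃ G₂₃) (D₂ : CompData G₁ G₂₃ G)
    (hst₁₂ : IsStrictTotalOrder G₁₂.E lt₁₂) (hst₂₃ : IsStrictTotalOrder G₂₃.E lt₂₃)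
    (hstA : IsStrictTotalOrder G.E ltA) (hstB : IsStrictTotalOrder G.E ltB)
    (hC₁ : IsCompOrder C₁ lt₁ lt₂ lt₁₂) (hC₂ : IsCompOrder C₂ lt₁₂ lt₃ ltA)
    (hD₁ : IsCompOrder D₁ lt₂ lt₃ lt₂₃) (hD₂ : IsCompOrder D₂ lt₁ lt₂₃ ltB)
    (hcoh₁ : ∀ a, C₂.j₁ (C₁.j₁ a) = D₂.j₁ a)
    (hcoh₂ : ∀ b, C₂.j₁ (C₁.j₂ b) = D₂.j₂ (D₁.j₁ b))
    (hcoh₃ : ∀ c, C₂.j₂ c = D₂.j₂ (D₁.j₂ c)) :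
    ltA = ltB := by
  clear hP₁ hA₁ hU₁ hAd₁ hP₂ hA₂ hU₂ hAd₂ hP₃ hA₃ hU₃ hAd₃
  obtain ⟨hC₁₁, hC₁₂, hC₁₃⟩ := hC₁
  obtain ⟨hC₂₁, hC₂₂, hC₂₃⟩ := hC₂
  obtain ⟨hD₁₁, hD₁₂, hD₁₃⟩ := hD₁
  obtain ⟨hD₂₁, hD₂₂, hD₂₃⟩ := hD₂
  haveI := hst₁₂; haveI := hst₂₃; haveI := hstA; haveI := hstB
  -- transfer of strict orders on same-type pairs
  have t11A : ∀ a a', ltA (D₂.j₁ a) (D₂.j₁ a') ↔ lt₁ a a' := by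
    intro a a'
    rw [← hcoh₁ a, ← hcoh₁ a']
    exact ((hC₁₁ a a').trans (hC₂₁ _ _)).symm
  have t11B : ∀ a a', ltB (D₂.j₁ a) (D₂.j₁ a') ↔ lt₁ a a' := fun a a' => (hD₂₁ a a').symm
  have t22A : ∀ b b', ltA (D₂.j₂ (D₁.j₁ b)) (D₂.j₂ (D₁.j₁ b')) ↔ lt₂ b b' := by
    intro b b'
    rw [← hcoh₂ b, ← hcoh₂ b']
    exact ((hC₁₂ b b').trans (hC₂₁ _ _)).symm
  have t22B : ∀ b b', ltB (D₂.j₂ (D₁.j₁ b)) (D₂.j₂ (D₁.j₁ b')) ↔ lt₂ b b' :=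
    fun b b' => ((hD₁₁ b b').trans (hD₂₂ _ _)).symm
  have t33A : ∀ c c', ltA (C₂.j₂ c) (C₂.j₂ c') ↔ lt₃ c c' := fun c c' => (hC₂₂ c c').symm
  have t33B : ∀ c c', ltB (C₂.j₂ c) (C₂.j₂ c') ↔ lt₃ c c' := by
    intro c c'
    rw [hcoh₃ c, hcoh₃ c']
    exact ((hD₁₂ c c').trans (hD₂₂ _ _)).symm
  -- gluing facts
  have gA' : ∀ {a b}, C₁.j₁ a = C₁.j₂ b → D₂.j₁ a = D₂.j₂ (D₁.j₁ b) := by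
    intro a b h; rw [← hcoh₁, h, hcoh₂]
  have gA : ∀ {a y}, D₂.j₁ a = D₂.j₂ y → ∃ b, C₁.j₁ a = C₁.j₂ b ∧ y = D₁.j₁ b := by
    intro a y h
    obtain ⟨ha, -⟩ := D₂.glue a y h
    obtain ⟨b, -, hb⟩ := C₁.glueOut a ha
    refine ⟨b, hb, D₂.inj₂ ?_⟩
    rw [← h, ← gA' hb]
  have gB : ∀ {o c}, D₁.j₁ o = D₁.j₂ c → C₂.j₁ (C₁.j₂ o) = C₂.j₂ c := by
    intro o c h; rw [hcoh₂, h, ← hcoh₃]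
  have gC : ∀ {x c}, C₂.j₁ x = C₂.j₂ c → ∃ b, x = C₁.j₂ b ∧ D₁.j₁ b = D₁.j₂ c := by
    intro x c h
    rcases C₁.coverE x with ⟨a, rfl⟩ | ⟨b, rfl⟩
    · have h' : D₂.j₁ a = D₂.j₂ (D₁.j₂ c) := by rw [← hcoh₁, h, hcoh₃]
      obtain ⟨b, hb, hy⟩ := gA h'
      exact ⟨b, hb, hy.symm⟩
    · have h' : D₂.j₂ (D₁.j₁ b) = D₂.j₂ (D₁.j₂ c) := by rw [← hcoh₂, h, hcoh₃]
      exact ⟨b, rfl, D₂.inj₂ h'⟩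
  have g1 : ∀ {a}, G₁.OutputEdge a → ∃ b, C₁.j₁ a = C₁.j₂ b :=
    fun ha => ((C₁.glueOut _ ha).imp fun b h => h.2)
  have g2 : ∀ {b}, G₂.InputEdge b → ∃ a, C₁.j₁ a = C₁.j₂ b :=
    fun hb => ((C₁.glueIn _ hb).imp fun a h => h.2)
  have g3 : ∀ {b}, G₂.OutputEdge b → ∃ c, D₁.j₁ b = D₁.j₂ c :=
    fun hb => ((D₁.glueOut _ hb).imp fun c h => h.2)
  have g4 : ∀ {c}, G₃.InputEdge c → ∃ b, D₁.j₁ b = D₁.j₂ c :=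
    fun hc => ((D₁.glueIn _ hc).imp fun b h => h.2)
  -- non-identification facts
  have na₁ : ∀ {a}, ¬G₁.OutputEdge a → ∀ b', C₁.j₁ a ≠ C₁.j₂ b' :=
    fun ha b' h => ha (C₁.glue _ _ h).1
  have naD : ∀ {a}, ¬G₁.OutputEdge a → ∀ y, D₂.j₁ a ≠ D₂.j₂ y :=
    fun ha y h => ha (D₂.glue _ _ h).1
  have naC : ∀ {a}, ¬G₁.OutputEdge a → ∀ c, C₂.j₁ (C₁.j₁ a) ≠ C₂.j₂ c := by
    intro a ha c h
    obtain ⟨b, hb, -⟩ := gC h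
    exact na₁ ha b hb
  have nb₁ : ∀ {b}, ¬G₂.InputEdge b → ∀ a', C₁.j₂ b ≠ C₁.j₁ a' :=
    fun hb a' h => hb (C₁.glue _ _ h.symm).2
  have nbD : ∀ {b}, ¬G₂.InputEdge b → ∀ a', D₂.j₂ (D₁.j₁ b) ≠ D₂.j₁ a' := by
    intro b hb a' h
    obtain ⟨b'', hb'', hy⟩ := gA h.symm
    have hbb : b = b'' := D₁.inj₁ hy
    exact hb (hbb ▸ (C₁.glue _ _ hb'').2)
  have nbO : ∀ {b}, ¬G₂.OutputEdge b → ∀ c, D₁.j₁ b ≠ D₁.j₂ c :=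
    fun hb c h => hb (D₁.glue _ _ h).1
  have nbC : ∀ {b}, ¬G₂.OutputEdge b → ∀ c, C₂.j₁ (C₁.j₂ b) ≠ C₂.j₂ c := by
    intro b hb c h
    obtain ⟨b', hb', hd⟩ := gC h
    have hbb : b = b' := C₁.inj₂ hb'
    exact nbO hb c (hbb ▸ hd)
  have ncC : ∀ {c}, ¬G₃.InputEdge c → ∀ x, C₂.j₁ x ≠ C₂.j₂ c :=
    fun hc x h => hc (C₂.glue _ _ h).2
  have ncD₁ : ∀ {c}, ¬G₃.InputEdge c → ∀ o, D₁.j₁ o ≠ D₁.j₂ c :=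
    fun hc o h => hc (D₁.glue _ _ h).2
  have ncD₂ : ∀ {c}, ¬G₃.InputEdge c → ∀ a, D₂.j₂ (D₁.j₂ c) ≠ D₂.j₁ a := by
    intro c hc a h
    obtain ⟨b, -, hy⟩ := gA h.symm
    exact hc (D₁.glue _ _ hy.symm).2
  -- reflexive-closure transfers
  have le12₁ : ∀ a a', G₁.le lt₁ a a' ↔ G₁₂.le lt₁₂ (C₁.j₁ a) (C₁.j₁ a') :=
    le_map_aux C₁.inj₁ hC₁₁
  have le12₂ : ∀ b b', G₂.le lt₂ b b' ↔ G₁₂.le lt₁₂ (C₁.j₂ b) (C₁.j₂ b') :=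
    le_map_aux C₁.inj₂ hC₁₂
  have le23₁ : ∀ b b', G₂.le lt₂ b b' ↔ G₂₃.le lt₂₃ (D₁.j₁ b) (D₁.j₁ b') :=
    le_map_aux D₁.inj₁ hD₁₁
  have le23₂ : ∀ c c', G₃.le lt₃ c c' ↔ G₂₃.le lt₂₃ (D₁.j₂ c) (D₁.j₂ c') :=
    le_map_aux D₁.inj₂ hD₁₂
  have ltr₁₂ : ∀ {x y z}, G₁₂.le lt₁₂ x y → G₁₂.le lt₁₂ y z → G₁₂.le lt₁₂ x z := by
    intro x y z h1 h2
    rcases h1 with h1 | h1 <;> rcases h2 with h2 | h2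
    · exact Or.inl (trans_of lt₁₂ h1 h2)
    · exact Or.inl (h2 ▸ h1)
    · exact Or.inl (h1 ▸ h2)
    · exact Or.inr (h1.trans h2)
  have ltr₂₃ : ∀ {x y z}, G₂₃.le lt₂₃ x y → G₂₃.le lt₂₃ y z → G₂₃.le lt₂₃ x z := by
    intro x y z h1 h2
    rcases h1 with h1 | h1 <;> rcases h2 with h2 | h2
    · exact Or.inl (trans_of lt₂₃ h1 h2)
    · exact Or.inl (h2 ▸ h1)
    · exact Or.inl (h1 ▸ h2)
    · exact Or.inr (h1.trans h2)
  -- case (1,2)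
  have case12 : ∀ a b, ¬G₁.OutputEdge a →
      (ltA (D₂.j₁ a) (D₂.j₂ (D₁.j₁ b)) ↔ ltB (D₂.j₁ a) (D₂.j₂ (D₁.j₁ b))) := by
    intro a b ha
    by_cases hb : G₂.InputEdge b
    · obtain ⟨a₀, h₀⟩ := g2 hb
      have hf : D₂.j₂ (D₁.j₁ b) = D₂.j₁ a₀ := (gA' h₀).symm
      rw [hf, t11A, t11B]
    · have hAiff : ltA (D₂.j₁ a) (D₂.j₂ (D₁.j₁ b)) ↔ lt₁₂ (C₁.j₁ a) (C₁.j₂ b) := by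
        rw [← hcoh₁ a, ← hcoh₂ b]
        exact (hC₂₁ _ _).symm
      have hshC := hC₁₃ a b (na₁ ha) (nb₁ hb)
      have hshD := hD₂₃ a (D₁.j₁ b) (naD ha) (nbD hb)
      rw [hAiff, hshC, hshD]
      constructor
      · rintro ⟨o, i, hoi, h1, h2⟩
        exact ⟨o, D₁.j₁ i, gA' hoi, h1, (le23₁ i b).mp h2⟩
      · rintro ⟨o, i', hoi, h1, h2⟩
        obtain ⟨i, hi, rfl⟩ := gA hoi
        exact ⟨o, i, hi, h1, (le23₁ i b).mpr h2⟩
  -- case (2,3)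
  have case23 : ∀ b c, ¬G₂.OutputEdge b →
      (ltA (D₂.j₂ (D₁.j₁ b)) (C₂.j₂ c) ↔ ltB (D₂.j₂ (D₁.j₁ b)) (C₂.j₂ c)) := by
    intro b c hb
    by_cases hc : G₃.InputEdge c
    · obtain ⟨b₀, h₀⟩ := g4 hc
      have hf : C₂.j₂ c = D₂.j₂ (D₁.j₁ b₀) := by rw [hcoh₃, ← h₀]
      rw [hf, t22A, t22B]
    · have hBiff : ltB (D₂.j₂ (D₁.j₁ b)) (C₂.j₂ c) ↔ lt₂₃ (D₁.j₁ b) (D₁.j₂ c) := by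
        rw [hcoh₃]
        exact (hD₂₂ _ _).symm
      have hshD := hD₁₃ b c (nbO hb) (fun o h => ncD₁ hc o h.symm)
      have hshC := hC₂₃ (C₁.j₂ b) c (nbC hb) (fun x h => ncC hc x h.symm)
      rw [hcoh₂ b] at hshC
      rw [hshC, hBiff, hshD]
      constructor
      · rintro ⟨x, i, hxi, h1, h2⟩
        obtain ⟨o, rfl, hoi⟩ := gC hxi
        exact ⟨o, i, hoi, (le12₂ b o).mpr h1, h2⟩
      · rintro ⟨o, i, hoi, h1, h2⟩
        exact ⟨C₁.j₂ o, i, gB hoi, (le12₂ b o).mp h1, h2⟩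
  -- case (1,3)
  have case13 : ∀ a c, ¬G₁.OutputEdge a →
      (ltA (D₂.j₁ a) (C₂.j₂ c) ↔ ltB (D₂.j₁ a) (C₂.j₂ c)) := by
    intro a c ha
    by_cases hc : G₃.InputEdge c
    · obtain ⟨b₀, h₀⟩ := g4 hc
      have hf : C₂.j₂ c = D₂.j₂ (D₁.j₁ b₀) := by rw [hcoh₃, ← h₀]
      rw [hf]
      exact case12 a b₀ ha
    · have hshA := hC₂₃ (C₁.j₁ a) c (naC ha) (fun x h => ncC hc x h.symm)
      have hshB := hD₂₃ a (D₁.j₂ c) (naD ha) (ncD₂ hc)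
      rw [hcoh₁ a] at hshA
      rw [← hcoh₃ c] at hshB
      rw [hshA, hshB]
      constructor
      · rintro ⟨x, i, hxi, h1, h2⟩
        obtain ⟨b', rfl, hbi⟩ := gC hxi
        by_cases hb' : G₂.InputEdge b'
        · obtain ⟨a₁, ha₁⟩ := g2 hb'
          refine ⟨a₁, D₁.j₁ b', gA' ha₁, ?_, ?_⟩
          · have h1' : G₁₂.le lt₁₂ (C₁.j₁ a) (C₁.j₁ a₁) := by rw [ha₁]; exact h1
            exact (le12₁ a a₁).mpr h1'
          · rw [hbi]
            exact (le23₂ i c).mp h2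
        · have h1' : lt₁₂ (C₁.j₁ a) (C₁.j₂ b') := h1.resolve_right (na₁ ha b')
          obtain ⟨o₁, i₁, hoi₁, hl1, hl2⟩ := (hC₁₃ a b' (na₁ ha) (nb₁ hb')).mp h1'
          refine ⟨o₁, D₁.j₁ i₁, gA' hoi₁, hl1, ?_⟩
          have s1 : G₂₃.le lt₂₃ (D₁.j₁ i₁) (D₁.j₂ i) := by
            rw [← hbi]
            exact (le23₁ i₁ b').mp hl2
          exact ltr₂₃ s1 ((le23₂ i c).mp h2)
      · rintro ⟨o, i', hoi, h1, h2⟩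
        obtain ⟨b₁, hob₁, rfl⟩ := gA hoi
        by_cases hb₁ : G₂.OutputEdge b₁
        · obtain ⟨c₁, hc₁⟩ := g3 hb₁
          refine ⟨C₁.j₂ b₁, c₁, gB hc₁, ?_, ?_⟩
          · rw [← hob₁]
            exact (le12₁ a o).mp h1
          · have h2' := h2
            rw [hc₁] at h2'
            exact (le23₂ c₁ c).mpr h2'
        · have h2' : lt₂₃ (D₁.j₁ b₁) (D₁.j₂ c) := h2.resolve_right (ncD₁ hc b₁)
          obtain ⟨o₂, i₂, hoi₂, hl1, hl2⟩ :=
            (hD₁₃ b₁ c (nbO hb₁) (fun o h => ncD₁ hc o h.symm)).mp h2'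
          refine ⟨C₁.j₂ o₂, i₂, gB hoi₂, ?_, hl2⟩
          have s1 : G₁₂.le lt₁₂ (C₁.j₁ a) (C₁.j₂ b₁) := by
            rw [← hob₁]
            exact (le12₁ a o).mp h1
          exact ltr₁₂ s1 ((le12₂ b₁ o₂).mp hl1)
  -- normal forms
  have reprE : ∀ e : G.E, (∃ a, ¬G₁.OutputEdge a ∧ e = D₂.j₁ a) ∨
      (∃ b, ¬G₂.OutputEdge b ∧ e = D₂.j₂ (D₁.j₁ b)) ∨ (∃ c, e = C₂.j₂ c) := by
    intro e
    have step2 : ∀ b, e = D₂.j₂ (D₁.j₁ b) →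
        (∃ b, ¬G₂.OutputEdge b ∧ e = D₂.j₂ (D₁.j₁ b)) ∨ (∃ c, e = C₂.j₂ c) := by
      intro b he
      by_cases h : G₂.OutputEdge b
      · obtain ⟨c, hc⟩ := g3 h
        exact Or.inr ⟨c, by rw [he, hc, ← hcoh₃]⟩
      · exact Or.inl ⟨b, h, he⟩
    rcases C₂.coverE e with ⟨x, hx⟩ | ⟨c, hc⟩
    · rcases C₁.coverE x with ⟨a, rfl⟩ | ⟨b, rfl⟩
      · by_cases h : G₁.OutputEdge a
        · obtain ⟨b, hab⟩ := g1 h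
          exact Or.inr (step2 b (by rw [← hx, hab, hcoh₂]))
        · exact Or.inl ⟨a, h, by rw [← hx, hcoh₁]⟩
      · exact Or.inr (step2 b (by rw [← hx, hcoh₂]))
    · exact Or.inr (Or.inr ⟨c, hc.symm⟩)
  -- reversing a case
  have flip : ∀ e f : G.E, e ≠ f → (ltA f e ↔ ltB f e) → (ltA e f ↔ ltB e f) := by
    intro e f hne h
    constructor
    · intro hA
      rcases trichotomous_of ltB e f with h' | h' | h'
      · exact h'
      · exact absurd h' hne
      · exact absurd (trans_of ltA hA (h.mpr h')) (irrefl_of ltA e)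
    · intro hB
      rcases trichotomous_of ltA e f with h' | h' | h'
      · exact h'
      · exact absurd h' hne
      · exact absurd (trans_of ltB hB (h.mp h')) (irrefl_of ltB e)
  have key : ∀ e f, ltA e f ↔ ltB e f := by
    intro e f
    rcases reprE e with ⟨a, ha, rfl⟩ | ⟨b, hb, rfl⟩ | ⟨c, rfl⟩ <;>
      rcases reprE f with ⟨a', ha', rfl⟩ | ⟨b', hb', rfl⟩ | ⟨c', rfl⟩
    · rw [t11A, t11B]
    · exact case12 a b' ha
    · exact case13 a c' ha
    · exact flip _ _ (fun h => naD ha' _ h.symm) (case12 a' b ha')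
    · rw [t22A, t22B]
    · exact case23 b c' hb
    · exact flip _ _ (fun h => naD ha' (D₁.j₂ c) (by rw [← h, hcoh₃])) (case13 a' c ha')
    · refine flip _ _ ?_ (case23 b' c hb')
      intro h
      have h' : D₂.j₂ (D₁.j₂ c) = D₂.j₂ (D₁.j₁ b') := by rw [← hcoh₃]; exact h
      exact nbO hb' c (D₂.inj₂ h').symm
    · rw [t33A, t33B]
  funext e f
  exact propext (key e f)
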